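/- Let Ω be a set of subspaces of F_q^{1×M} such that any two distinct members of Ω are at subspace distance at least D from each other. Let X ∈ F_q^{n×M} with ⟨X⟩ ∈ Ω, let A ∈ F_q^{N×n} with rank A ≥ n − ρ, let Z ∈ F_q^{ℓ×M} with at most t nonzero rows, let B ∈ F_q^{N×ℓ}, and set Y = AX + BZ. If 2(2t + ρ) < D, then for every V ∈ Ω with V ≠ ⟨X⟩ one has d_S(⟨X⟩, ⟨Y⟩) < d_S(V, ⟨Y⟩); that is, ⟨X⟩ is the unique minimizer over Ω of the subspace distance to ⟨Y⟩, so minimum subspace distance decoding is guaranteed to recover ⟨X⟩. -/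

import Mathlib

/-- The row space of a matrix: the span of its rows. -/
noncomputable def rowSpace {F : Type*} [Field F] {ι κ : Type*}
    (M : Matrix ι κ F) : Submodule F (κ → F) :=
  Submodule.span F (Set.range fun i => M i)

/-- The subspace distance `d_S(U,V) = dim(U + V) - dim(U ∩ V)`. -/
noncomputable def sDist {F : Type*} [Field F] {κ : Type*}
    (U V : Submodule F (κ → F)) : ℕ :=
  Module.finrank F ↥(U ⊔ V) - Module.finrank F ↥(U ⊓ V)

section Aux

variable {F : Type*} [Field F] {M : ℕ}

open Module Submodule Matrix

lemma rowSpace_eq_range {a b : ℕ} (P : Matrix (Fin a) (Fin b) F) :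
    rowSpace P = LinearMap.range P.vecMulLinear := by
  rw [range_vecMulLinear, rowSpace]; rfl

lemma vecMul_mem_rowSpace {a b : ℕ} (P : Matrix (Fin a) (Fin b) F) (v : Fin a → F) :
    v ᵥ* P ∈ rowSpace P := by
  rw [rowSpace_eq_range]
  exact ⟨v, rfl⟩

lemma row_mul_mem_rowSpace {a b c : ℕ} (P : Matrix (Fin a) (Fin b) F)
    (Q : Matrix (Fin b) (Fin c) F) (i : Fin a) : (P * Q) i ∈ rowSpace Q := by
  have : (P * Q) i = (P i) ᵥ* Q := by
    ext j
    simp [Matrix.mul_apply, Matrix.vecMul, dotProduct]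
  rw [this]
  exact vecMul_mem_rowSpace Q (P i)

lemma sDist_cast (U V : Submodule F (Fin M → F)) :
    (sDist U V : ℤ) =
      (finrank F ↥(U ⊔ V) : ℤ) - (finrank F ↥(U ⊓ V) : ℤ) := by
  have h : finrank F ↥(U ⊓ V) ≤ finrank F ↥(U ⊔ V) :=
    Submodule.finrank_mono (le_trans inf_le_left le_sup_left)
  rw [sDist, Nat.cast_sub h]

lemma sDist_cast' (U V : Submodule F (Fin M → F)) :
    (sDist U V : ℤ) =
      (finrank F ↥U : ℤ) + finrank F ↥V - 2 * finrank F ↥(U ⊓ V) := by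
  have := Submodule.finrank_sup_add_finrank_inf_eq U V
  rw [sDist_cast]
  have : (finrank F ↥(U ⊔ V) : ℤ) + finrank F ↥(U ⊓ V)
      = finrank F ↥U + finrank F ↥V := by exact_mod_cast congrArg Nat.cast this
  omega

lemma sDist_comm (U V : Submodule F (Fin M → F)) : sDist U V = sDist V U := by
  rw [sDist, sDist, sup_comm, inf_comm]

lemma sDist_triangle (U V W : Submodule F (Fin M → F)) :
    sDist U W ≤ sDist U V + sDist V W := by
  have key : finrank F ↥(U ⊓ V) + finrank F ↥(V ⊓ W)
      ≤ finrank F ↥V + finrank F ↥(U ⊓ W) := by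
    have h1 : finrank F ↥((U ⊓ V) ⊔ (V ⊓ W)) ≤ finrank F ↥V :=
      Submodule.finrank_mono (sup_le inf_le_right inf_le_left)
    have h2 : finrank F ↥((U ⊓ V) ⊓ (V ⊓ W)) ≤ finrank F ↥(U ⊓ W) :=
      Submodule.finrank_mono (le_inf (le_trans inf_le_left inf_le_left)
        (le_trans inf_le_right inf_le_right))
    have h3 := Submodule.finrank_sup_add_finrank_inf_eq (U ⊓ V) (V ⊓ W)
    omega
  have := sDist_cast' U W
  have := sDist_cast' U V
  have := sDist_cast' V W
  have : (finrank F ↥(U ⊓ V) : ℤ) + finrank F ↥(V ⊓ W)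
      ≤ (finrank F ↥V : ℤ) + finrank F ↥(U ⊓ W) := by exact_mod_cast key
  omega

lemma finrank_sup_le (U V : Submodule F (Fin M → F)) :
    finrank F ↥(U ⊔ V) ≤ finrank F ↥U + finrank F ↥V := by
  have h := Submodule.finrank_sup_add_finrank_inf_eq U V
  omega

end Aux

open scoped Classical in
/-- if a subspace code `Ω` has minimum distance at least `D`,
`⟨X⟩ ∈ Ω`, `Y = AX + BZ` with `rank A ≥ n − ρ`, `Z` has at most `t` nonzero
rows, and `2(2t + ρ) < D`, then `⟨X⟩` is the unique minimizer over `Ω` of the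
subspace distance to `⟨Y⟩`. -/
theorem min_subspace_distance_decoding
    {F : Type*} [Field F] [Fintype F] {n N ℓ M : ℕ} {ρ t D : ℕ}
    (Ω : Set (Submodule F (Fin M → F)))
    (hΩ : ∀ U ∈ Ω, ∀ V ∈ Ω, U ≠ V → D ≤ sDist U V)
    (X : Matrix (Fin n) (Fin M) F) (hX : rowSpace X ∈ Ω)
    (A : Matrix (Fin N) (Fin n) F) (hA : (n : ℤ) - (ρ : ℤ) ≤ (A.rank : ℤ))
    (Z : Matrix (Fin ℓ) (Fin M) F)
    (hZ : (Finset.univ.filter fun i => Z i ≠ 0).card ≤ t)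
    (B : Matrix (Fin N) (Fin ℓ) F)
    (Y : Matrix (Fin N) (Fin M) F) (hY : Y = A * X + B * Z)
    (hD : 2 * (2 * t + ρ) < D) :
    ∀ V ∈ Ω, V ≠ rowSpace X →
      sDist (rowSpace X) (rowSpace Y) < sDist V (rowSpace Y) := by
  intro V hV hVX
  open Module Submodule Matrix in
  -- Notation
  set RX := rowSpace X with hRX
  set RY := rowSpace Y with hRY
  set RZ := rowSpace Z with hRZ
  set RAX := rowSpace (A * X) with hRAX
  -- dim RZ ≤ t
  have hdZ : finrank F ↥RZ ≤ t := by
    have hsub : RZ ≤ Submodule.span F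
        (((Finset.univ.filter fun i => Z i ≠ 0).image Z : Finset (Fin M → F)) : Set (Fin M → F)) := by
      rw [hRZ, rowSpace, Submodule.span_le]
      rintro x ⟨i, rfl⟩
      show Z i ∈ _
      by_cases h : Z i = 0
      · simp only [h]
        exact Submodule.zero_mem _
      · exact Submodule.subset_span (by
          simp only [Finset.coe_image, Set.mem_image, Finset.mem_coe, Finset.mem_filter]
          exact Finset.mem_image.2 ⟨i, Finset.mem_filter.2 ⟨Finset.mem_univ i, h⟩, rfl⟩)
    calc finrank F ↥RZ ≤ finrank F ↥(Submodule.span F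
          (((Finset.univ.filter fun i => Z i ≠ 0).image Z : Finset (Fin M → F)) : Set (Fin M → F))) :=
            Submodule.finrank_mono hsub
      _ ≤ ((Finset.univ.filter fun i => Z i ≠ 0).image Z).card :=
            finrank_span_finset_le_card _
      _ ≤ (Finset.univ.filter fun i => Z i ≠ 0).card := Finset.card_image_le
      _ ≤ t := hZ
  -- inclusions
  have hYle : RY ≤ RX ⊔ RZ := by
    rw [hRY, rowSpace, Submodule.span_le]
    rintro x ⟨i, rfl⟩
    show Y i ∈ _
    have : Y i = (A * X) i + (B * Z) i := by rw [hY]; rfl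
    rw [this]
    exact Submodule.add_mem _
      (Submodule.mem_sup_left (by
        have h1 : (A * X) i ∈ rowSpace X := row_mul_mem_rowSpace A X i
        have h2 : rowSpace (A * X) ≤ rowSpace X := by
          rw [rowSpace, Submodule.span_le]; rintro y ⟨j, rfl⟩
          show (A * X) j ∈ _
          exact row_mul_mem_rowSpace A X j
        exact h1))
      (Submodule.mem_sup_right (row_mul_mem_rowSpace B Z i))
  have hAXleX : RAX ≤ RX := by
    rw [hRAX, rowSpace, Submodule.span_le]
    rintro y ⟨j, rfl⟩
    show (A * X) j ∈ _
    exact row_mul_mem_rowSpace A X j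
  have hAXle : RAX ≤ RY ⊔ RZ := by
    rw [hRAX, rowSpace, Submodule.span_le]
    rintro y ⟨j, rfl⟩
    show (A * X) j ∈ _
    have : (A * X) j = Y j - (B * Z) j := by rw [hY]; ext k; simp [Matrix.add_apply]
    rw [this]
    exact Submodule.sub_mem _
      (Submodule.mem_sup_left (by
        rw [hRY, rowSpace]; exact Submodule.subset_span ⟨j, rfl⟩))
      (Submodule.mem_sup_right (row_mul_mem_rowSpace B Z j))
  -- rank of AX ≥ rank X - ρ
  have hrankAX : (finrank F ↥RX : ℤ) - ρ ≤ (finrank F ↥RAX : ℤ) := by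
    set f := X.vecMulLinear with hf
    set W := LinearMap.range A.vecMulLinear with hW
    have hRXr : RX = LinearMap.range f := rowSpace_eq_range X
    have hWrank : (n : ℤ) - ρ ≤ (finrank F ↥W : ℤ) := by
      have : W = LinearMap.range Aᵀ.mulVecLin := by
        rw [hW, Matrix.mulVecLin_transpose]
      rw [this]
      have : finrank F ↥(LinearMap.range Aᵀ.mulVecLin) = Aᵀ.rank := rfl
      rw [this, Matrix.rank_transpose]
      exact hA
    have hRAXmap : RAX = Submodule.map f W := by
      rw [hRAX, rowSpace_eq_range]
      have hcomp : (A * X).vecMulLinear = f.comp A.vecMulLinear := by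
        apply LinearMap.ext; intro v
        simp [hf, Matrix.vecMul_vecMul]
      rw [hcomp, LinearMap.range_comp]
    -- rank-nullity for f restricted to W
    have hrn := LinearMap.finrank_range_add_finrank_ker (f.domRestrict W)
    rw [LinearMap.range_domRestrict] at hrn
    have hkerW : finrank F ↥(LinearMap.ker (f.domRestrict W))
        = finrank F ↥(W ⊓ LinearMap.ker f) := by
      have h1 : LinearMap.ker (f.domRestrict W) = Submodule.comap W.subtype (LinearMap.ker f) :=
        LinearMap.ker_domRestrict W f
      have h2 : Submodule.comap W.subtype (LinearMap.ker f)
          = Submodule.comap W.subtype (W ⊓ LinearMap.ker f) := by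
        apply le_antisymm
        · intro x hx
          exact ⟨x.2, hx⟩
        · intro x hx
          exact hx.2
      rw [h1, h2]
      exact LinearEquiv.finrank_eq (Submodule.comapSubtypeEquivOfLe inf_le_left)
    have hkerle : finrank F ↥(W ⊓ LinearMap.ker f) ≤ finrank F ↥(LinearMap.ker f) :=
      Submodule.finrank_mono inf_le_right
    have hrnf := LinearMap.finrank_range_add_finrank_ker f
    have hdom : finrank F (Fin n → F) = n := by simp
    rw [hdom] at hrnf
    have hWn : finrank F ↥W ≤ n := by
      have := Submodule.finrank_le W
      rw [hdom] at this
      exact this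
    rw [hRAXmap]
    rw [hRXr]
    have h1 : finrank F ↥(Submodule.map f W) + finrank F ↥(W ⊓ LinearMap.ker f)
        = finrank F ↥W := by rw [← hkerW]; exact hrn
    omega
  -- dim bounds for sDist RX RY
  have hsup : finrank F ↥(RX ⊔ RY) ≤ finrank F ↥RX + finrank F ↥RZ := by
    calc finrank F ↥(RX ⊔ RY) ≤ finrank F ↥(RX ⊔ RZ) :=
          Submodule.finrank_mono (sup_le le_sup_left (le_trans hYle le_rfl))
      _ ≤ finrank F ↥RX + finrank F ↥RZ := finrank_sup_le _ _
  have hinf : (finrank F ↥RAX : ℤ) - finrank F ↥RZ ≤ (finrank F ↥(RX ⊓ RY) : ℤ) := by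
    have h1 : finrank F ↥(RAX ⊓ RY) ≤ finrank F ↥(RX ⊓ RY) :=
      Submodule.finrank_mono (inf_le_inf_right _ hAXleX)
    have h2 : finrank F ↥(RAX ⊔ RY) ≤ finrank F ↥RY + finrank F ↥RZ := by
      calc finrank F ↥(RAX ⊔ RY) ≤ finrank F ↥(RY ⊔ RZ) :=
            Submodule.finrank_mono (sup_le hAXle le_sup_left)
        _ ≤ finrank F ↥RY + finrank F ↥RZ := finrank_sup_le _ _
    have h3 := Submodule.finrank_sup_add_finrank_inf_eq RAX RY
    omega
  have hXY : (sDist RX RY : ℤ) ≤ 2 * t + ρ := by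
    rw [sDist_cast]
    have hdZ' : (finrank F ↥RZ : ℤ) ≤ t := by exact_mod_cast hdZ
    have hsup' : (finrank F ↥(RX ⊔ RY) : ℤ) ≤ finrank F ↥RX + finrank F ↥RZ := by
      exact_mod_cast hsup
    omega
  -- Conclusion via triangle inequality
  have hDle : (D : ℤ) ≤ sDist V RX := by exact_mod_cast hΩ V hV RX hX hVX
  have htri : (sDist V RX : ℤ) ≤ sDist V RY + sDist RY RX := by
    exact_mod_cast sDist_triangle V RY RX
  have hsymm : sDist RY RX = sDist RX RY := sDist_comm RY RX
  have hcast : ((sDist RX RY : ℤ) < sDist V RY) → sDist RX RY < sDist V RY := by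
    exact_mod_cast fun h => h
  apply hcast
  rw [hsymm] at htri
  have hD' : (2 * (2 * t + ρ) : ℤ) < D := by exact_mod_cast hD
  omega
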